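/- Let p ≥ 6 be an even integer, n ≥ 2, and let i_1 ≤ i_2 ≤ ⋯ ≤ i_n be colors in C_p. Define δ_p(i_1,…,i_n) as the number of j ∈ C_p such that (i_1,…,i_n,j) has a chain coloring. Let ε ∈ {0,1} be the parity of i_1+⋯+i_n, and set ε(p) = ε if p ≡ 0 (mod 4) and ε(p) = 1−ε if p ≡ 2 (mod 4). Set J_max = min over integers ℓ with 0 ≤ ℓ ≤ n/2 of min((p−4)/2 − ε(p), Σ_{t=1}^{n−2ℓ} i_t − Σ_{s=n−2ℓ+1}^{n} i_s + ℓ(p−4)), and J_min = max over integers k with 0 ≤ k and n−2k−1 ≥ 0 of max(ε, Σ_{s=n−2k}^{n} i_s − Σ_{t=1}^{n−2k−1} i_t − k(p−4)). Then δ_p(i_1,…,i_n) = 1 + (J_max − J_min)/2; in particular δ_p(i_1,…,i_n) ≥ 1. -/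

import Mathlib

/-- Level-`p` colors for even `p`: natural numbers `j` with `j ≤ (p - 4)/2`. -/
def ColorEven (p j : ℕ) : Prop := 2 * j + 4 ≤ p

/-- `p`-admissibility of a triple of colors for even `p`:
`|b - c| ≤ a ≤ b + c`, `a + b + c` even, and `a + b + c ≤ p - 4`. -/
def AdmEven (p a b c : ℕ) : Prop :=
  b ≤ a + c ∧ c ≤ a + b ∧ a ≤ b + c ∧ Even (a + b + c) ∧ a + b + c + 4 ≤ p

/-- `ChainFrom adm C a l e` : starting from the color `a`, the boundary colors `l`
can be connected by the chain of internal colors `e` (each internal color satisfying `C`),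
all consecutive triples being admissible. -/
def ChainFrom (adm : ℕ → ℕ → ℕ → Prop) (C : ℕ → Prop) : ℕ → List ℕ → List ℕ → Prop
  | a, [x, y], [] => adm a x y
  | a, x :: rest, e :: es => C e ∧ adm a x e ∧ ChainFrom adm C e rest es
  | _, _, _ => False

/-- `IsChainColoring adm C i e` : `e = (e_1, …, e_{m-3})` is a chain coloring for the
boundary tuple `i = (i_1, …, i_m)`, i.e. the triples `(i_1,i_2,e_1), (e_1,i_3,e_2), …,
(e_{m-3}, i_{m-1}, i_m)` are all admissible and each `e_t` is a color. -/
def IsChainColoring (adm : ℕ → ℕ → ℕ → Prop) (C : ℕ → Prop) : List ℕ → List ℕ → Prop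
  | i1 :: rest, e => ChainFrom adm C i1 rest e
  | [], _ => False

/-- A chain coloring for the boundary tuple `i` exists. -/
def HasChain (adm : ℕ → ℕ → ℕ → Prop) (C : ℕ → Prop) (i : List ℕ) : Prop :=
  ∃ e, IsChainColoring adm C i e

/-- `δ_p(i)`: the number of colors `j ∈ C_p` such that `(i_1, …, i_n, j)` has a
chain coloring. -/
noncomputable def deltaEven (p : ℕ) (i : List ℕ) : ℕ :=
  {j : ℕ | ColorEven p j ∧ HasChain (AdmEven p) (ColorEven p) (i ++ [j])}.ncard

/-- `ε ∈ {0,1}`, the parity of `∑ i_s`. -/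
def epsI (n : ℕ) (i : Fin n → ℕ) : ℤ := if Even (∑ s, i s) then 0 else 1

/-- `ε(p) = ε` if `p ≡ 0 (mod 4)` and `ε(p) = 1 - ε` if `p ≡ 2 (mod 4)`. -/
def epsP (p n : ℕ) (i : Fin n → ℕ) : ℤ :=
  if p % 4 = 0 then epsI n i else 1 - epsI n i

/-- `J_{p,max}(i) = min_{0 ≤ ℓ ≤ n/2} min ((p-4)/2 - ε(p),
∑_{t=1}^{n-2ℓ} i_t - ∑_{s=n-2ℓ+1}^{n} i_s + ℓ(p-4))`, indices of `i` being `1`-based. -/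
def JmaxEven (p n : ℕ) (i : Fin n → ℕ) : ℤ :=
  (Finset.range (n / 2 + 1)).inf' (Finset.nonempty_range_iff.mpr (Nat.succ_ne_zero _))
    fun l => min (((p : ℤ) - 4) / 2 - epsP p n i)
      ((∑ t ∈ Finset.univ.filter (fun t : Fin n => (t : ℕ) < n - 2 * l), (i t : ℤ))
        - (∑ s ∈ Finset.univ.filter (fun s : Fin n => n - 2 * l ≤ (s : ℕ)), (i s : ℤ))
        + (l : ℤ) * ((p : ℤ) - 4))

/-- `J_{p,min}(i) = max_{0 ≤ k, n-2k-1 ≥ 0} max (ε, ∑_{s=n-2k}^{n} i_s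
- ∑_{t=1}^{n-2k-1} i_t - k(p-4))`, indices of `i` being `1`-based. -/
def JminEven (p n : ℕ) (i : Fin n → ℕ) : ℤ :=
  (Finset.range ((n - 1) / 2 + 1)).sup' (Finset.nonempty_range_iff.mpr (Nat.succ_ne_zero _))
    fun k => max (epsI n i)
      ((∑ s ∈ Finset.univ.filter (fun s : Fin n => n - (2 * k + 1) ≤ (s : ℕ)), (i s : ℤ))
        - (∑ t ∈ Finset.univ.filter (fun t : Fin n => (t : ℕ) < n - (2 * k + 1)), (i t : ℤ))
        - (k : ℤ) * ((p : ℤ) - 4))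

namespace Stmt5Aux

def S (I : ℕ → ℕ) (m : ℕ) : ℤ := ∑ t ∈ Finset.range m, (I t : ℤ)
def em (I : ℕ → ℕ) (m : ℕ) : ℤ := S I m % 2
def cap (p : ℕ) (I : ℕ → ℕ) (m : ℕ) : ℤ :=
  ((p : ℤ) - 4) / 2 - (((p : ℤ) - 4) / 2 - em I m) % 2
def f (p : ℕ) (I : ℕ → ℕ) (m l : ℕ) : ℤ :=
  2 * S I (m - 2 * l) - S I m + (l : ℤ) * ((p : ℤ) - 4)
def g (p : ℕ) (I : ℕ → ℕ) (m k : ℕ) : ℤ :=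
  S I m - 2 * S I (m - (2 * k + 1)) - (k : ℤ) * ((p : ℤ) - 4)
def Ucf (p : ℕ) (I : ℕ → ℕ) (m : ℕ) : ℤ :=
  min (cap p I m)
    ((Finset.range (m / 2 + 1)).inf' (Finset.nonempty_range_iff.mpr (Nat.succ_ne_zero _))
      (f p I m))
def Lcf (p : ℕ) (I : ℕ → ℕ) (m : ℕ) : ℤ :=
  max (em I m)
    ((Finset.range ((m - 1) / 2 + 1)).sup' (Finset.nonempty_range_iff.mpr (Nat.succ_ne_zero _))
      (g p I m))
def ReachF (p : ℕ) (I : ℕ → ℕ) : ℕ → ℕ → Prop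
  | 0, j => j = I 0
  | m + 1, j => ∃ e, ColorEven p e ∧ ReachF p I m e ∧ AdmEven p e (I (m + 1)) j

lemma em_mem (I : ℕ → ℕ) (m : ℕ) : em I m = 0 ∨ em I m = 1 := by unfold em; omega
lemma S_succ (I : ℕ → ℕ) (m : ℕ) : S I (m + 1) = S I m + I m := by
  simp [S, Finset.sum_range_succ]


lemma step (p : ℕ) (hp : 6 ≤ p) (hpe : p % 2 = 0) (ε L U : ℤ)
    (hε : 0 ≤ ε ∧ ε ≤ 1) (hLp : L % 2 = ε % 2) (hUp : U % 2 = ε % 2)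
    (hεL : ε ≤ L) (hLU : L ≤ U) (hUh : U ≤ ((p : ℤ) - 4) / 2)
    (x : ℕ) (hx : 2 * x + 4 ≤ p) (j : ℕ) :
    (∃ e : ℕ, ColorEven p e ∧ ((e : ℤ) % 2 = ε % 2 ∧ L ≤ (e : ℤ) ∧ (e : ℤ) ≤ U)
        ∧ AdmEven p e x j)
      ↔ ((j : ℤ) % 2 = (ε + x) % 2
          ∧ max (max ((ε + x) % 2) (L - x)) ((x : ℤ) - U) ≤ (j : ℤ)
          ∧ (j : ℤ) ≤ min (min (((p:ℤ) - 4) / 2 - (((p:ℤ) - 4) / 2 - (ε + x) % 2) % 2)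
              (U + x)) ((p : ℤ) - 4 - x - L)) := by
  constructor
  · rintro ⟨e, hce, ⟨hep, hLe, heU⟩, h1, h2, h3, h4, h5⟩
    rw [Nat.even_iff] at h4
    unfold ColorEven at hce
    refine ⟨by omega, ?_, ?_⟩
    · simp only [max_le_iff]; omega
    · simp only [le_min_iff]; omega
  · rintro ⟨hjp, hjl, hju⟩
    simp only [max_le_iff] at hjl
    simp only [le_min_iff] at hju
    obtain ⟨⟨hj1, hj2⟩, hj3⟩ := hjl
    obtain ⟨⟨hj4, hj5⟩, hj6⟩ := hju
    obtain ⟨M, hML, hM1, hM2, hMpar, hMmax⟩ :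
        ∃ M : ℤ, L ≤ M ∧ (x : ℤ) - j ≤ M ∧ (j : ℤ) - x ≤ M ∧ M % 2 = ε % 2 ∧
          (M = L ∨ M = (x : ℤ) - j ∨ M = (j : ℤ) - x) := by
      refine ⟨max L (max ((x : ℤ) - j) ((j : ℤ) - x)), le_max_left _ _,
        le_trans (le_max_left _ _) (le_max_right _ _),
        le_trans (le_max_right _ _) (le_max_right _ _), ?_, ?_⟩
      · rcases max_choice L (max ((x : ℤ) - j) ((j : ℤ) - x)) with h | h <;> rw [h]
        · exact hLp
        · rcases max_choice ((x : ℤ) - j) ((j : ℤ) - x) with h' | h' <;> rw [h'] <;> omega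
      · rcases max_choice L (max ((x : ℤ) - j) ((j : ℤ) - x)) with h | h
        · exact .inl h
        · rcases max_choice ((x : ℤ) - j) ((j : ℤ) - x) with h' | h' <;> rw [h, h']
          · exact .inr (.inl rfl)
          · exact .inr (.inr rfl)
    have hMU : M ≤ U := by omega
    have hM0 : 0 ≤ M := by omega
    refine ⟨M.toNat, ?_, ⟨?_, ?_, ?_⟩, ?_, ?_, ?_, ?_, ?_⟩
    · unfold ColorEven; omega
    · omega
    · omega
    · omega
    · omega
    · omega
    · omega
    · rw [Nat.even_iff]; omega
    · omega

lemma fA (p : ℕ) (I : ℕ → ℕ) (m l : ℕ) (hl : 2 * l ≤ m) :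
    f p I (m + 1) l = f p I m l + I m + 2 * ((I (m - 2 * l) : ℤ) - I m) := by
  unfold f
  have h1 : m + 1 - 2 * l = (m - 2 * l) + 1 := by omega
  rw [h1, S_succ, S_succ]; ring

lemma fB (p : ℕ) (I : ℕ → ℕ) (m k : ℕ) (hk : 2 * k + 1 ≤ m) :
    f p I (m + 1) (k + 1) = (p : ℤ) - 4 - I m - g p I m k := by
  unfold f g
  have h1 : m + 1 - 2 * (k + 1) = m - (2 * k + 1) := by omega
  rw [h1, S_succ]; push_cast; ring

lemma f_zero (p : ℕ) (I : ℕ → ℕ) (m : ℕ) : f p I m 0 = S I m := by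
  simp only [f]; simp; omega

lemma Urec (p : ℕ) (I : ℕ → ℕ) (hp : 6 ≤ p) (hpe : p % 2 = 0) (m : ℕ) (hm : 1 ≤ m)
    (hcol : ∀ t, t ≤ m → 2 * I t + 4 ≤ p)
    (hmono : ∀ a b, a ≤ b → b ≤ m → I a ≤ I b) :
    Ucf p I (m + 1) = min (cap p I (m + 1))
      (min (Ucf p I m + I m) ((p : ℤ) - 4 - I m - Lcf p I m)) := by
  have hS := S_succ I m
  have hIm : 2 * I m + 4 ≤ p := hcol m le_rfl
  apply le_antisymm
  · apply le_min (min_le_left _ _)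
    apply le_min
    · rw [Ucf, ← min_add_add_right]
      apply le_min
      · refine le_trans (min_le_left _ _) ?_
        unfold cap em
        omega
      · obtain ⟨l0, hl0, hval⟩ := Finset.exists_mem_eq_inf'
          (Finset.nonempty_range_iff.mpr (Nat.succ_ne_zero _)) (f p I m)
        rw [hval]
        rw [Finset.mem_range] at hl0
        have h2l : 2 * l0 ≤ m := by omega
        refine le_trans (le_trans (min_le_right _ _)
          (Finset.inf'_le (f p I (m + 1))
            (Finset.mem_range.mpr (show l0 < (m + 1) / 2 + 1 by omega)))) ?_
        rw [fA p I m l0 h2l]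
        have := hmono (m - 2 * l0) m (by omega) le_rfl
        omega
    · have h1 : Ucf p I (m + 1) ≤ (p : ℤ) - 4 - I m - em I m := by
        refine le_trans (min_le_left _ _) ?_
        unfold cap em
        omega
      have h2 : Ucf p I (m + 1) ≤ (p : ℤ) - 4 - I m
          - ((Finset.range ((m - 1) / 2 + 1)).sup'
              (Finset.nonempty_range_iff.mpr (Nat.succ_ne_zero _)) (g p I m)) := by
        obtain ⟨k0, hk0, hval⟩ := Finset.exists_mem_eq_sup'
          (Finset.nonempty_range_iff.mpr (Nat.succ_ne_zero _)) (g p I m)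
        rw [hval]
        rw [Finset.mem_range] at hk0
        have hk : 2 * k0 + 1 ≤ m := by omega
        rw [← fB p I m k0 hk]
        exact le_trans (min_le_right _ _) (Finset.inf'_le (f p I (m + 1))
          (Finset.mem_range.mpr (show k0 + 1 < (m + 1) / 2 + 1 by omega)))
      rw [Lcf]
      rcases max_choice (em I m) ((Finset.range ((m - 1) / 2 + 1)).sup'
        (Finset.nonempty_range_iff.mpr (Nat.succ_ne_zero _)) (g p I m)) with h | h <;>
        rw [h]
      · exact h1
      · exact h2
  · apply le_min (min_le_left _ _)
    apply Finset.le_inf'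
    intro l hl
    rw [Finset.mem_range] at hl
    cases l with
    | zero =>
      have : f p I (m + 1) 0 = f p I m 0 + I m := by
        rw [f_zero, f_zero, hS]
      rw [this]
      refine le_trans (le_trans (min_le_right _ _) (min_le_left _ _)) ?_
      have : Ucf p I m ≤ f p I m 0 :=
        le_trans (min_le_right _ _) (Finset.inf'_le _ (Finset.mem_range.mpr (by omega)))
      omega
    | succ k =>
      have hk : 2 * k + 1 ≤ m := by omega
      rw [fB p I m k hk]
      refine le_trans (le_trans (min_le_right _ _) (min_le_right _ _)) ?_
      have : g p I m k ≤ Lcf p I m :=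
        le_trans (Finset.le_sup' _ (Finset.mem_range.mpr (by omega))) (le_max_right _ _)
      omega

lemma gA (p : ℕ) (I : ℕ → ℕ) (m k : ℕ) (hk : 2 * k ≤ m) :
    g p I (m + 1) k = (I m : ℤ) - f p I m k := by
  unfold f g
  have h1 : m + 1 - (2 * k + 1) = m - 2 * k := by omega
  rw [h1, S_succ]; ring

lemma Lrec (p : ℕ) (I : ℕ → ℕ) (hp : 6 ≤ p) (hpe : p % 2 = 0) (m : ℕ) (hm : 1 ≤ m)
    (hcol : ∀ t, t ≤ m → 2 * I t + 4 ≤ p)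
    (hmono : ∀ a b, a ≤ b → b ≤ m → I a ≤ I b) :
    Lcf p I (m + 1) = max (em I (m + 1))
      (max (Lcf p I m - I m) ((I m : ℤ) - Ucf p I m)) := by
  have hS := S_succ I m
  have hIm : 2 * I m + 4 ≤ p := hcol m le_rfl
  have hrange : ((m + 1) - 1) / 2 + 1 = m / 2 + 1 := by omega
  apply le_antisymm
  · apply max_le (le_max_left _ _)
    apply Finset.sup'_le
    intro k hk
    rw [Finset.mem_range, hrange] at hk
    have h2k : 2 * k ≤ m := by omega
    rw [gA p I m k h2k]
    refine le_trans ?_ (le_max_right _ _)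
    refine le_trans ?_ (le_max_right _ _)
    have : Ucf p I m ≤ f p I m k :=
      le_trans (min_le_right _ _) (Finset.inf'_le _ (Finset.mem_range.mpr (by omega)))
    omega
  · apply max_le
    · exact le_max_left _ _
    apply max_le
    · -- Lcf m - I m ≤ Lcf (m+1)
      rw [Lcf]
      rcases max_choice (em I m) ((Finset.range ((m - 1) / 2 + 1)).sup'
        (Finset.nonempty_range_iff.mpr (Nat.succ_ne_zero _)) (g p I m)) with h | h <;>
        rw [h]
      · refine le_trans ?_ (le_max_left _ _)
        unfold em
        omega
      · obtain ⟨k0, hk0, hval⟩ := Finset.exists_mem_eq_sup'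
          (Finset.nonempty_range_iff.mpr (Nat.succ_ne_zero _)) (g p I m)
        rw [hval]
        rw [Finset.mem_range] at hk0
        have hk : 2 * k0 + 1 ≤ m := by omega
        have hgg : g p I m k0 - I m ≤ g p I (m + 1) k0 := by
          rw [gA p I m k0 (by omega)]
          have key : g p I m k0 + f p I m k0 = 2 * I (m - (2 * k0 + 1)) := by
            unfold f g
            have h1 : m - 2 * k0 = (m - (2 * k0 + 1)) + 1 := by omega
            rw [h1, S_succ]; ring
          have hmm := hmono (m - (2 * k0 + 1)) m (by omega) le_rfl
          omega
        refine le_trans hgg ?_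
        refine le_trans (Finset.le_sup' (g p I (m+1))
          (Finset.mem_range.mpr (by omega : k0 < ((m+1) - 1)/2 + 1))) (le_max_right _ _)
    · -- I m - Ucf m ≤ Lcf (m+1)
      rw [Ucf]
      rcases min_choice (cap p I m) ((Finset.range (m / 2 + 1)).inf'
        (Finset.nonempty_range_iff.mpr (Nat.succ_ne_zero _)) (f p I m)) with h | h <;>
        rw [h]
      · refine le_trans ?_ (le_max_left _ _)
        unfold cap em
        omega
      · obtain ⟨l0, hl0, hval⟩ := Finset.exists_mem_eq_inf'
          (Finset.nonempty_range_iff.mpr (Nat.succ_ne_zero _)) (f p I m)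
        rw [hval]
        rw [Finset.mem_range] at hl0
        rw [← gA p I m l0 (by omega)]
        refine le_trans (Finset.le_sup' (g p I (m+1))
          (Finset.mem_range.mpr (by omega : l0 < ((m+1) - 1)/2 + 1))) (le_max_right _ _)

lemma S_one (I : ℕ → ℕ) : S I 1 = (I 0 : ℤ) := by simp [S]

lemma inf'_range_c (c : ℕ) (hc : c = 0) (H : (Finset.range (c + 1)).Nonempty) (F : ℕ → ℤ) :
    (Finset.range (c + 1)).inf' H F = F 0 := by
  apply le_antisymm (Finset.inf'_le _ (Finset.mem_range.mpr (by omega)))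
  apply Finset.le_inf'
  intro l hl
  rw [Finset.mem_range] at hl
  exact le_of_eq (by rw [show l = 0 by omega])

lemma sup'_range_c (c : ℕ) (hc : c = 0) (H : (Finset.range (c + 1)).Nonempty) (F : ℕ → ℤ) :
    (Finset.range (c + 1)).sup' H F = F 0 := by
  apply le_antisymm
  · apply Finset.sup'_le
    intro l hl
    rw [Finset.mem_range] at hl
    exact le_of_eq (by rw [show l = 0 by omega])
  · exact Finset.le_sup' _ (Finset.mem_range.mpr (by omega))

lemma main (p : ℕ) (hp : 6 ≤ p) (hpe : p % 2 = 0) (I : ℕ → ℕ) :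
    ∀ m, 1 ≤ m → (∀ t, t < m → 2 * I t + 4 ≤ p) → (∀ a b, a ≤ b → b < m → I a ≤ I b) →
    ((∀ j : ℕ, ReachF p I (m - 1) j ↔
        ((j : ℤ) % 2 = em I m ∧ Lcf p I m ≤ (j : ℤ) ∧ (j : ℤ) ≤ Ucf p I m))
      ∧ em I m ≤ Lcf p I m ∧ Lcf p I m ≤ Ucf p I m ∧ Ucf p I m ≤ ((p : ℤ) - 4) / 2
      ∧ Lcf p I m % 2 = em I m ∧ Ucf p I m % 2 = em I m) := by
  intro m hm1
  induction m, hm1 using Nat.le_induction with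
  | base =>
    intro hcol _
    have hI0 : 2 * I 0 + 4 ≤ p := hcol 0 (by omega)
    have hU1 : Ucf p I 1 = (I 0 : ℤ) := by
      rw [Ucf, inf'_range_c _ (by norm_num) _ _, f_zero, S_one]
      apply min_eq_right
      unfold cap em
      rw [S_one]
      omega
    have hL1 : Lcf p I 1 = (I 0 : ℤ) := by
      rw [Lcf, sup'_range_c _ (by norm_num) _ _]
      have hg : g p I 1 0 = (I 0 : ℤ) := by
        unfold g
        simp [S_one, S]
      rw [hg]
      apply max_eq_right
      unfold em
      rw [S_one]
      omega
    have he1 : em I 1 = (I 0 : ℤ) % 2 := by unfold em; rw [S_one]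
    refine ⟨fun j => ?_, by omega, by omega, by omega, by omega, by omega⟩
    rw [hU1, hL1, he1]
    show j = I 0 ↔ _
    constructor
    · rintro rfl; omega
    · rintro ⟨h1, h2, h3⟩
      have : (j : ℤ) = (I 0 : ℤ) := le_antisymm h3 h2
      exact_mod_cast this
  | succ m hm IH =>
    intro hcol hmono
    obtain ⟨hiff, hinv1, hinv2, hinv3, hinv4, hinv5⟩ :=
      IH (fun t ht => hcol t (by omega)) (fun a b hab hb => hmono a b hab (by omega))
    have hx : 2 * I m + 4 ≤ p := hcol m (by omega)
    have hem01 := em_mem I m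
    have hem01' := em_mem I (m + 1)
    have he2 : em I m % 2 = em I m := by omega
    have hS := S_succ I m
    have hem' : em I (m + 1) = (em I m + I m) % 2 := by unfold em; omega
    have hUrec := Urec p I hp hpe m hm (fun t ht => hcol t (by omega))
      (fun a b hab hb => hmono a b hab (by omega))
    have hLrec := Lrec p I hp hpe m hm (fun t ht => hcol t (by omega))
      (fun a b hab hb => hmono a b hab (by omega))
    have hcap' : cap p I (m + 1)
        = ((p:ℤ) - 4) / 2 - (((p:ℤ) - 4) / 2 - (em I m + I m) % 2) % 2 := by
      unfold cap; rw [hem']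
    have hLfacts : (Lcf p I (m+1) = em I (m+1) ∨ Lcf p I (m+1) = Lcf p I m - I m
          ∨ Lcf p I (m+1) = (I m : ℤ) - Ucf p I m)
        ∧ em I (m+1) ≤ Lcf p I (m+1) ∧ Lcf p I m - I m ≤ Lcf p I (m+1)
        ∧ (I m : ℤ) - Ucf p I m ≤ Lcf p I (m+1) := by
      rw [hLrec]
      refine ⟨?_, le_max_left _ _, le_trans (le_max_left _ _) (le_max_right _ _),
        le_trans (le_max_right _ _) (le_max_right _ _)⟩
      rcases max_choice (em I (m+1)) (max (Lcf p I m - I m) ((I m : ℤ) - Ucf p I m)) with h | h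
      · exact .inl h
      · rw [h]
        rcases max_choice (Lcf p I m - I m) ((I m : ℤ) - Ucf p I m) with h' | h' <;> rw [h']
        · exact .inr (.inl rfl)
        · exact .inr (.inr rfl)
    have hUfacts : (Ucf p I (m+1) = cap p I (m+1) ∨ Ucf p I (m+1) = Ucf p I m + I m
          ∨ Ucf p I (m+1) = (p:ℤ) - 4 - I m - Lcf p I m)
        ∧ Ucf p I (m+1) ≤ cap p I (m+1) ∧ Ucf p I (m+1) ≤ Ucf p I m + I m
        ∧ Ucf p I (m+1) ≤ (p:ℤ) - 4 - I m - Lcf p I m := by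
      rw [hUrec]
      refine ⟨?_, min_le_left _ _, le_trans (min_le_right _ _) (min_le_left _ _),
        le_trans (min_le_right _ _) (min_le_right _ _)⟩
      rcases min_choice (cap p I (m+1)) (min (Ucf p I m + I m) ((p:ℤ) - 4 - I m - Lcf p I m)) with h | h
      · exact .inl h
      · rw [h]
        rcases min_choice (Ucf p I m + I m) ((p:ℤ) - 4 - I m - Lcf p I m) with h' | h' <;> rw [h']
        · exact .inr (.inl rfl)
        · exact .inr (.inr rfl)
    obtain ⟨hL1, hL2, hL3, hL4⟩ := hLfacts
    obtain ⟨hU1, hU2, hU3, hU4⟩ := hUfacts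
    constructor
    · intro j
      have hstep := step p hp hpe (em I m) (Lcf p I m) (Ucf p I m) ⟨by omega, by omega⟩
        (by omega) (by omega) hinv1 hinv2 hinv3 (I m) hx j
      have hlhs : ReachF p I (m + 1 - 1) j ↔
          (∃ e : ℕ, ColorEven p e ∧ ((e : ℤ) % 2 = em I m % 2 ∧ Lcf p I m ≤ (e : ℤ)
            ∧ (e : ℤ) ≤ Ucf p I m) ∧ AdmEven p e (I m) j) := by
        have hm1 : m + 1 - 1 = (m - 1) + 1 := by omega
        rw [hm1]
        show (∃ e, ColorEven p e ∧ ReachF p I (m - 1) e ∧ AdmEven p e (I (m - 1 + 1)) j) ↔ _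
        have hmm : m - 1 + 1 = m := by omega
        rw [hmm]
        refine exists_congr fun e => ?_
        rw [hiff e, he2]
      simp only [max_le_iff, le_min_iff] at hstep
      refine hlhs.trans (hstep.trans ?_)
      constructor
      · rintro ⟨h1, h2, h3⟩
        exact ⟨by omega, by omega, by omega⟩
      · rintro ⟨h1, h2, h3⟩
        refine ⟨by omega, ⟨⟨?_, ?_⟩, ?_⟩, ⟨⟨?_, ?_⟩, ?_⟩⟩ <;> omega
    · omega

def Reach2 (p : ℕ) : ℕ → List ℕ → ℕ → Prop
  | _, [], _ => False
  | a, [x], j => AdmEven p a x j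
  | a, x :: y :: xs, j => ∃ e, ColorEven p e ∧ AdmEven p a x e ∧ Reach2 p e (y :: xs) j

lemma chain_iff_reach2 (p : ℕ) : ∀ (l : List ℕ) (a j : ℕ), l ≠ [] →
    ((∃ es, ChainFrom (AdmEven p) (ColorEven p) a (l ++ [j]) es) ↔ Reach2 p a l j) := by
  intro l
  induction l with
  | nil => intro a j h; exact absurd rfl h
  | cons x xs IH =>
    intro a j _
    cases xs with
    | nil =>
      constructor
      · rintro ⟨es, h⟩
        cases es with
        | nil => exact h
        | cons e es' =>
          obtain ⟨hc, ha, h2⟩ := h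
          cases es' with
          | nil => exact absurd h2 id
          | cons e' es'' =>
            obtain ⟨_, _, h3⟩ := h2
            exact absurd h3 id
      · intro h
        exact ⟨[], h⟩
    | cons y ys =>
      obtain ⟨c, cs, hcc⟩ : ∃ c cs, ys ++ [j] = c :: cs := by
        cases ys <;> exact ⟨_, _, rfl⟩
      have hl1 : (x :: y :: ys) ++ [j] = x :: y :: c :: cs := by simp [hcc]
      have hl2 : (y :: ys) ++ [j] = y :: c :: cs := by simp [hcc]
      rw [hl1]
      constructor
      · rintro ⟨es, h⟩
        cases es with
        | nil => exact absurd h id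
        | cons e es' =>
          obtain ⟨hc, ha, h2⟩ := h
          refine ⟨e, hc, ha, (IH e j (by simp)).mp ⟨es', ?_⟩⟩
          rw [hl2]
          exact h2
      · rintro ⟨e, hc, ha, h⟩
        obtain ⟨es', h2⟩ := (IH e j (by simp)).mpr h
        rw [hl2] at h2
        exact ⟨e :: es', hc, ha, h2⟩

lemma reach2_snoc (p : ℕ) : ∀ (xs : List ℕ) (x a j : ℕ), xs ≠ [] →
    (Reach2 p a (xs ++ [x]) j ↔ ∃ e, ColorEven p e ∧ Reach2 p a xs e ∧ AdmEven p e x j) := by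
  intro xs
  induction xs with
  | nil => intro x a j h; exact absurd rfl h
  | cons y ys IH =>
    intro x a j _
    cases ys with
    | nil =>
      show (∃ e, ColorEven p e ∧ AdmEven p a y e ∧ AdmEven p e x j) ↔ _
      exact exists_congr fun e => by tauto
    | cons z zs =>
      show (∃ e, ColorEven p e ∧ AdmEven p a y e ∧ Reach2 p e ((z :: zs) ++ [x]) j) ↔ _
      constructor
      · rintro ⟨e, hc, ha, h⟩
        obtain ⟨e', hc', h1, h2⟩ := (IH x e j (by simp)).mp h
        exact ⟨e', hc', ⟨e, hc, ha, h1⟩, h2⟩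
      · rintro ⟨e', hc', ⟨e, hc, ha, h1⟩, h2⟩
        exact ⟨e, hc, ha, (IH x e j (by simp)).mpr ⟨e', hc', h1, h2⟩⟩

lemma reach2_iff_reachF (p : ℕ) (I : ℕ → ℕ) (hI0 : ColorEven p (I 0)) :
    ∀ m, 1 ≤ m → ∀ j, (Reach2 p (I 0) ((List.range' 1 m).map I) j ↔ ReachF p I m j) := by
  intro m hm
  induction m, hm using Nat.le_induction with
  | base =>
    intro j
    show Reach2 p (I 0) [I 1] j ↔ _
    show AdmEven p (I 0) (I 1) j ↔ _
    show _ ↔ ∃ e, ColorEven p e ∧ e = I 0 ∧ AdmEven p e (I 1) j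
    constructor
    · intro h; exact ⟨I 0, hI0, rfl, h⟩
    · rintro ⟨e, _, rfl, h⟩; exact h
  | succ m hm IH =>
    intro j
    rw [List.range'_1_concat, List.map_append, List.map_cons, List.map_nil]
    have hne : (List.range' 1 m).map I ≠ [] := by
      intro h
      apply_fun List.length at h
      simp at h
      omega
    rw [reach2_snoc p _ _ _ _ hne]
    show (∃ e, ColorEven p e ∧ _ ∧ AdmEven p e (I (1 + m)) j) ↔
      ∃ e, ColorEven p e ∧ ReachF p I m e ∧ AdmEven p e (I (m + 1)) j
    rw [show 1 + m = m + 1 by omega]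
    exact exists_congr fun e => by rw [IH e]

lemma count_lemma (e L U : ℤ) (h0 : 0 ≤ L) (hLU : L ≤ U) (hLe : L % 2 = e)
    (hUe : U % 2 = e) :
    ({j : ℕ | (j : ℤ) % 2 = e ∧ L ≤ (j : ℤ) ∧ (j : ℤ) ≤ U}.ncard : ℤ) = (U - L) / 2 + 1 := by
  have hset : {j : ℕ | (j : ℤ) % 2 = e ∧ L ≤ (j : ℤ) ∧ (j : ℤ) ≤ U}
      = ↑((Finset.range (((U - L) / 2).toNat + 1)).image (fun t => L.toNat + 2 * t)) := by
    ext j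
    simp only [Finset.coe_image, Set.mem_image, Finset.mem_coe, Finset.mem_range,
      Set.mem_setOf_eq]
    constructor
    · rintro ⟨h1, h2, h3⟩
      exact ⟨(j - L.toNat) / 2, by omega, by omega⟩
    · rintro ⟨t, ht, rfl⟩
      refine ⟨by push_cast; omega, by push_cast; omega, by push_cast; omega⟩
  rw [hset, Set.ncard_coe_finset,
    Finset.card_image_of_injective _ (fun a b hab => by omega), Finset.card_range]
  push_cast
  omega

lemma min_inf' (s : Finset ℕ) (H : s.Nonempty) (c : ℤ) (F : ℕ → ℤ) :
    s.inf' H (fun x => min c (F x)) = min c (s.inf' H F) := by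
  apply le_antisymm
  · apply le_min
    · obtain ⟨x, hx⟩ := H
      exact le_trans (Finset.inf'_le _ hx) (min_le_left _ _)
    · exact Finset.le_inf' _ _ fun x hx => le_trans (Finset.inf'_le _ hx) (min_le_right _ _)
  · apply Finset.le_inf'
    intro x hx
    exact le_min (min_le_left _ _) (le_trans (min_le_right _ _) (Finset.inf'_le _ hx))

lemma max_sup' (s : Finset ℕ) (H : s.Nonempty) (c : ℤ) (F : ℕ → ℤ) :
    s.sup' H (fun x => max c (F x)) = max c (s.sup' H F) := by
  apply le_antisymm
  · apply Finset.sup'_le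
    intro x hx
    exact max_le (le_max_left _ _) (le_trans (Finset.le_sup' _ hx) (le_max_right _ _))
  · apply max_le
    · obtain ⟨x, hx⟩ := H
      exact le_trans (le_max_left c (F x)) (Finset.le_sup' (fun x => max c (F x)) hx)
    · exact Finset.sup'_le _ _ fun x hx =>
        le_trans (le_max_right c (F x)) (Finset.le_sup' (fun x => max c (F x)) hx)

section Glue

variable {n : ℕ} (i : Fin n → ℕ)

lemma filter_lt_sum (I : ℕ → ℕ) (hIi : ∀ t (h : t < n), I t = i ⟨t, h⟩) (c : ℕ) (hc : c ≤ n) :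
    (∑ t ∈ Finset.univ.filter (fun t : Fin n => (t : ℕ) < c), (i t : ℤ)) = S I c := by
  rw [S, Finset.sum_filter, Finset.sum_fin_eq_sum_range]
  rw [← Finset.sum_subset (Finset.range_subset_range.mpr hc)]
  · apply Finset.sum_congr rfl
    intro x hx
    rw [Finset.mem_range] at hx
    rw [dif_pos (show x < n by omega), if_pos hx, hIi x (by omega)]
  · intro x hx hxc
    rw [Finset.mem_range] at hx hxc
    rw [dif_pos (show x < n by omega), if_neg (show ¬ (x < c) by omega)]

lemma filter_ge_sum (I : ℕ → ℕ) (hIi : ∀ t (h : t < n), I t = i ⟨t, h⟩) (c : ℕ) (hc : c ≤ n) :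
    (∑ t ∈ Finset.univ.filter (fun t : Fin n => c ≤ (t : ℕ)), (i t : ℤ)) = S I n - S I c := by
  have htot := Finset.sum_filter_add_sum_filter_not Finset.univ
    (fun t : Fin n => (t : ℕ) < c) (fun t => (i t : ℤ))
  have hcongr : Finset.univ.filter (fun t : Fin n => ¬((t : ℕ) < c))
      = Finset.univ.filter (fun t : Fin n => c ≤ (t : ℕ)) := by
    apply Finset.filter_congr
    intro t _
    simp [Nat.not_lt]
  have huniv : (∑ t : Fin n, (i t : ℤ)) = S I n := by
    have := filter_lt_sum i I hIi n le_rfl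
    rw [Finset.filter_true_of_mem (fun t _ => t.isLt)] at this
    exact this
  rw [hcongr, filter_lt_sum i I hIi c hc] at htot
  omega

lemma sum_univ_eq_S (I : ℕ → ℕ) (hIi : ∀ t (h : t < n), I t = i ⟨t, h⟩) :
    (∑ t : Fin n, (i t : ℤ)) = S I n := by
  have := filter_lt_sum i I hIi n le_rfl
  rw [Finset.filter_true_of_mem (fun t _ => t.isLt)] at this
  exact this

lemma epsI_eq (I : ℕ → ℕ) (hIi : ∀ t (h : t < n), I t = i ⟨t, h⟩) :
    epsI n i = em I n := by
  have hsum : ((∑ s : Fin n, i s : ℕ) : ℤ) = S I n := by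
    rw [← sum_univ_eq_S i I hIi]
    push_cast
    rfl
  unfold epsI em
  rcases Nat.even_or_odd (∑ s : Fin n, i s) with h | h
  · rw [if_pos h]
    rw [Nat.even_iff] at h
    omega
  · rw [if_neg (by rwa [← Nat.not_even_iff_odd] at h)]
    rw [Nat.odd_iff] at h
    omega

lemma cap_eq (p : ℕ) (hp : 6 ≤ p) (hpe : p % 2 = 0) (I : ℕ → ℕ)
    (hIi : ∀ t (h : t < n), I t = i ⟨t, h⟩) :
    ((p : ℤ) - 4) / 2 - epsP p n i = cap p I n := by
  have hepsI := epsI_eq i I hIi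
  have hem := em_mem I n
  unfold epsP cap
  rw [hepsI]
  by_cases h4 : p % 4 = 0
  · rw [if_pos h4]
    omega
  · rw [if_neg h4]
    omega

lemma Jmax_eq (p : ℕ) (hp : 6 ≤ p) (hpe : p % 2 = 0) (I : ℕ → ℕ)
    (hIi : ∀ t (h : t < n), I t = i ⟨t, h⟩) :
    JmaxEven p n i = Ucf p I n := by
  have hstep : JmaxEven p n i = (Finset.range (n / 2 + 1)).inf'
      (Finset.nonempty_range_iff.mpr (Nat.succ_ne_zero _))
      (fun l => min (cap p I n) (f p I n l)) := by
    apply Finset.inf'_congr _ rfl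
    intro l hl
    rw [Finset.mem_range] at hl
    rw [cap_eq i p hp hpe I hIi,
      filter_lt_sum i I hIi (n - 2 * l) (by omega),
      filter_ge_sum i I hIi (n - 2 * l) (by omega)]
    unfold f
    ring_nf
  rw [hstep, min_inf', Ucf]

lemma Jmin_eq (p : ℕ) (hp : 6 ≤ p) (hpe : p % 2 = 0) (I : ℕ → ℕ)
    (hIi : ∀ t (h : t < n), I t = i ⟨t, h⟩) :
    JminEven p n i = Lcf p I n := by
  have hstep : JminEven p n i = (Finset.range ((n - 1) / 2 + 1)).sup'
      (Finset.nonempty_range_iff.mpr (Nat.succ_ne_zero _))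
      (fun k => max (em I n) (g p I n k)) := by
    apply Finset.sup'_congr _ rfl
    intro k hk
    rw [Finset.mem_range] at hk
    rw [epsI_eq i I hIi,
      filter_lt_sum i I hIi (n - (2 * k + 1)) (by omega),
      filter_ge_sum i I hIi (n - (2 * k + 1)) (by omega)]
    unfold g
    ring_nf
  rw [hstep, max_sup', Lcf]

end Glue
end Stmt5Aux
/-- for even `p ≥ 6`, `n ≥ 2` and nondecreasing colors `i_1 ≤ ⋯ ≤ i_n` in `C_p`,
`δ_p(i_1,…,i_n) = 1 + (J_max - J_min)/2`; in particular `δ_p(i_1,…,i_n) ≥ 1`. -/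
theorem stmt5 (p : ℕ) (hp : 6 ≤ p) (heven : Even p) (n : ℕ) (hn : 2 ≤ n)
    (i : Fin n → ℕ) (hi : ∀ s, ColorEven p (i s)) (hmono : Monotone i) :
    (deltaEven p (List.ofFn i) : ℤ)
        = 1 + (JmaxEven p n i - JminEven p n i) / 2 ∧
      1 ≤ deltaEven p (List.ofFn i) := by
  classical
  open Stmt5Aux in
  have hpe : p % 2 = 0 := Nat.even_iff.mp heven
  set I : ℕ → ℕ := fun t => if h : t < n then i ⟨t, h⟩ else 0 with hIdef
  have hIi : ∀ t (h : t < n), I t = i ⟨t, h⟩ := fun t h => dif_pos h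
  have hcol : ∀ t, t < n → 2 * I t + 4 ≤ p := fun t ht => by
    rw [hIi t ht]; exact hi ⟨t, ht⟩
  have hmono' : ∀ a b, a ≤ b → b < n → I a ≤ I b := by
    intro a b hab hb
    rw [hIi a (by omega), hIi b hb]
    exact hmono (show (⟨a, by omega⟩ : Fin n) ≤ ⟨b, hb⟩ from hab)
  obtain ⟨hiff, hinv1, hinv2, hinv3, hinv4, hinv5⟩ :=
    Stmt5Aux.main p hp hpe I n (by omega) hcol hmono'
  have hI0c : ColorEven p (I 0) := hcol 0 (by omega)
  have hofn : List.ofFn i = I 0 :: (List.range' 1 (n - 1)).map I := by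
    apply List.ext_getElem
    · simp; omega
    · intro k h1 h2
      rw [List.getElem_ofFn]
      cases k with
      | zero =>
        simp only [List.getElem_cons_zero]
        rw [hIi 0 (by omega)]
      | succ t =>
        simp only [List.getElem_cons_succ, List.getElem_map, List.getElem_range']
        rw [hIi _ (by simp at h1; omega)]
        apply congrArg i
        apply Fin.ext
        show t + 1 = 1 + 1 * t
        omega
  have hne : (List.range' 1 (n - 1)).map I ≠ [] := by
    intro h
    apply_fun List.length at h
    simp at h
    omega
  have hsetchain : ∀ j : ℕ, HasChain (AdmEven p) (ColorEven p) (List.ofFn i ++ [j])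
      ↔ Stmt5Aux.ReachF p I (n - 1) j := by
    intro j
    rw [hofn]
    show (∃ es, ChainFrom (AdmEven p) (ColorEven p) (I 0)
      ((List.range' 1 (n - 1)).map I ++ [j]) es) ↔ _
    rw [Stmt5Aux.chain_iff_reach2 p _ _ _ hne]
    exact Stmt5Aux.reach2_iff_reachF p I hI0c (n - 1) (by omega) j
  have hset : {j : ℕ | ColorEven p j ∧ HasChain (AdmEven p) (ColorEven p) (List.ofFn i ++ [j])}
      = {j : ℕ | (j : ℤ) % 2 = Stmt5Aux.em I n ∧ Stmt5Aux.Lcf p I n ≤ (j : ℤ)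
          ∧ (j : ℤ) ≤ Stmt5Aux.Ucf p I n} := by
    ext j
    simp only [Set.mem_setOf_eq]
    rw [hsetchain j, hiff j]
    constructor
    · tauto
    · intro h
      refine ⟨?_, h⟩
      show 2 * j + 4 ≤ p
      have h3 := h.2.2
      omega
  have hem01 := Stmt5Aux.em_mem I n
  have hdelta : (deltaEven p (List.ofFn i) : ℤ)
      = (Stmt5Aux.Ucf p I n - Stmt5Aux.Lcf p I n) / 2 + 1 := by
    rw [deltaEven, hset]
    exact Stmt5Aux.count_lemma (Stmt5Aux.em I n) _ _ (by omega) hinv2 hinv4 hinv5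
  have hJmax := Stmt5Aux.Jmax_eq i p hp hpe I hIi
  have hJmin := Stmt5Aux.Jmin_eq i p hp hpe I hIi
  constructor
  · rw [hdelta, hJmax, hJmin]
    omega
  · have h1 : (1 : ℤ) ≤ (deltaEven p (List.ofFn i) : ℤ) := by
      rw [hdelta]
      omega
    omega
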